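/- Let V be a finite-dimensional real vector space, let p, q ≥ 0, and let E be the space of all maps Φ : (V*)^p × V^q → ℝ that are ℝ-linear in each argument, with GL(V) acting linearly on E by (g·Φ)(ω_1, …, ω_p, v_1, …, v_q) = Φ(ω_1 ∘ g, …, ω_p ∘ g, g⁻¹ v_1, …, g⁻¹ v_q). If E' ⊆ E is a GL(V)-invariant linear subspace, then every GL(V)-invariant linear functional φ : E' → ℝ is the restriction to E' of a GL(V)-invariant linear functional on E. -/

import Mathlib

variable {V : Type*} [AddCommGroup V] [Module ℝ V] {p q : ℕ}

/-- The space `E` of multilinear functionals `(V*)^p × V^q → ℝ`, realized as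
multilinear maps in `p` dual arguments with values in multilinear maps in `q` vector
arguments. -/
abbrev TensorFunctional (V : Type*) [AddCommGroup V] [Module ℝ V] (p q : ℕ) :=
  MultilinearMap ℝ (fun _ : Fin p => Module.Dual ℝ V)
    (MultilinearMap ℝ (fun _ : Fin q => V) ℝ)

/-- Precomposition of the `q` vector arguments with `g⁻¹`, as a linear map. -/
def innerComp (g : V ≃ₗ[ℝ] V) :
    (MultilinearMap ℝ (fun _ : Fin q => V) ℝ) →ₗ[ℝ]
      (MultilinearMap ℝ (fun _ : Fin q => V) ℝ) where
  toFun Ψ := Ψ.compLinearMap fun _ => (g.symm : V →ₗ[ℝ] V)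
  map_add' a b := by ext v; simp
  map_smul' c a := by ext v; simp

/-- The action of `GL(V)` on `E`: `(g·Φ)(ω₁,…,ω_p, v₁,…,v_q) =
Φ(ω₁ ∘ g, …, ω_p ∘ g, g⁻¹v₁, …, g⁻¹v_q)`. -/
noncomputable def glAct (g : V ≃ₗ[ℝ] V) (Φ : TensorFunctional V p q) : TensorFunctional V p q :=
  (innerComp g).compMultilinearMap
    (Φ.compLinearMap fun _ => LinearMap.dualMap (g : V →ₗ[ℝ] V))

lemma glAct_apply (g : V ≃ₗ[ℝ] V) (Φ : TensorFunctional V p q)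
    (ω : Fin p → Module.Dual ℝ V) (v : Fin q → V) :
    glAct g Φ ω v = Φ (fun i => (ω i).comp (g : V →ₗ[ℝ] V)) (fun j => g.symm (v j)) := rfl

lemma glAct_add (g : V ≃ₗ[ℝ] V) (Φ Ψ : TensorFunctional V p q) :
    glAct g (Φ + Ψ) = glAct g Φ + glAct g Ψ := by
  ext ω v; simp [glAct_apply]

section Transp
variable {ι : Type*} [Fintype ι] [DecidableEq ι] (b : Module.Basis ι ℝ V)

/-- the "transpose" of `g` with respect to the basis `b` -/
noncomputable def transpEquiv (g : V ≃ₗ[ℝ] V) : V ≃ₗ[ℝ] V :=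
  (b.toDualEquiv.trans g.dualMap).trans b.toDualEquiv.symm

lemma transpEquiv_entry (g : V ≃ₗ[ℝ] V) (i k : ι) :
    b.dualBasis i (transpEquiv b g (b k)) = b.dualBasis k (g (b i)) := by
  have hx : b.toDualEquiv (b k) = b.dualBasis k := by
    apply b.ext
    intro j
    rw [Module.Basis.toDualEquiv_apply, Module.Basis.toDual_apply_right, ← Module.Basis.coord_apply,
      ← Module.Basis.coe_dualBasis]
  have key : ∀ η : Module.Dual ℝ V, b.dualBasis i (b.toDualEquiv.symm η) = η (b i) := by
    intro η
    have h : b.toDualEquiv (b.toDualEquiv.symm η) = η := b.toDualEquiv.apply_symm_apply η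
    calc b.dualBasis i (b.toDualEquiv.symm η)
        = b.repr (b.toDualEquiv.symm η) i := by
          rw [Module.Basis.coe_dualBasis, Module.Basis.coord_apply]
      _ = b.toDual (b.toDualEquiv.symm η) (b i) := (b.toDual_apply_left _ i).symm
      _ = η (b i) := by rw [← Module.Basis.toDualEquiv_apply, h]
  calc b.dualBasis i (transpEquiv b g (b k))
      = b.dualBasis i (b.toDualEquiv.symm (g.dualMap (b.toDualEquiv (b k)))) := rfl
    _ = g.dualMap (b.toDualEquiv (b k)) (b i) := key _
    _ = b.dualBasis k (g (b i)) := by rw [hx]; rfl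

lemma transpEquiv_symm (g : V ≃ₗ[ℝ] V) :
    (transpEquiv b g).symm = transpEquiv b g.symm := by
  ext x
  simp [transpEquiv, LinearEquiv.dualMap_symm]

lemma transpEquiv_symm_entry (g : V ≃ₗ[ℝ] V) (l j : ι) :
    b.dualBasis l ((transpEquiv b g).symm (b j)) = b.dualBasis j (g.symm (b l)) := by
  rw [transpEquiv_symm, transpEquiv_entry]

end Transp

section Coeff

variable {ι : Type*} [Fintype ι] [DecidableEq ι] (b : Module.Basis ι ℝ V)

/-- basis coefficients of a tensor functional -/
noncomputable def coeffT (Φ : TensorFunctional V p q) (I : Fin p → ι) (J : Fin q → ι) : ℝ :=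
  Φ (fun a => b.dualBasis (I a)) (fun j => b (J j))

lemma coeffT_add (Φ Ψ : TensorFunctional V p q) (I J) :
    coeffT b (Φ + Ψ) I J = coeffT b Φ I J + coeffT b Ψ I J := by simp [coeffT]

lemma coeffT_smul (c : ℝ) (Φ : TensorFunctional V p q) (I J) :
    coeffT b (c • Φ) I J = c * coeffT b Φ I J := by simp [coeffT]

lemma eq_zero_of_coeffT (Φ : TensorFunctional V p q)
    (h : ∀ I J, coeffT b Φ I J = 0) : Φ = 0 := by
  apply Module.Basis.ext_multilinear (fun _ => b.dualBasis)
  intro I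
  apply Module.Basis.ext_multilinear (fun _ => b)
  intro J
  simpa [coeffT] using h I J

/-- expansion of a dual vector composed with g -/
lemma dual_comp_expand (g : V ≃ₗ[ℝ] V) (i : ι) :
    (b.dualBasis i).comp (g : V →ₗ[ℝ] V)
      = ∑ k : ι, b.dualBasis i (g (b k)) • b.dualBasis k := by
  apply b.ext
  intro k
  simp [Module.Basis.dualBasis_apply_self, Finsupp.single_apply, mul_ite]

lemma vec_expand (x : V) : x = ∑ l : ι, b.dualBasis l x • b l := by
  simp [Module.Basis.coe_dualBasis, Module.Basis.coord_apply, Module.Basis.sum_repr]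

lemma coeffT_glAct (g : V ≃ₗ[ℝ] V) (Φ : TensorFunctional V p q) (I : Fin p → ι)
    (J : Fin q → ι) :
    coeffT b (glAct g Φ) I J
      = ∑ K : Fin p → ι, ∑ L : Fin q → ι,
          (∏ a, b.dualBasis (I a) (g (b (K a)))) *
            ((∏ j, b.dualBasis (L j) (g.symm (b (J j)))) * coeffT b Φ K L) := by
  rw [coeffT, glAct_apply]
  have h1 : (fun a : Fin p => (b.dualBasis (I a)).comp (g : V →ₗ[ℝ] V))
      = fun a : Fin p => ∑ k : ι, b.dualBasis (I a) (g (b k)) • b.dualBasis k := by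
    funext a; exact dual_comp_expand b g (I a)
  have h2 : (fun j : Fin q => g.symm (b (J j)))
      = fun j : Fin q => ∑ l : ι, b.dualBasis l (g.symm (b (J j))) • b l := by
    funext j; exact vec_expand b _
  rw [h1, h2, MultilinearMap.map_sum]
  simp_rw [MultilinearMap.map_smul_univ]
  rw [MultilinearMap.map_sum]
  simp only [MultilinearMap.sum_apply, MultilinearMap.map_smul_univ, MultilinearMap.smul_apply,
    smul_eq_mul, Finset.mul_sum]
  rw [Finset.sum_comm]
  refine Finset.sum_congr rfl fun K _ => Finset.sum_congr rfl fun L _ => ?_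
  rw [coeffT]
  ring

/-- linear version of `coeffT` -/
noncomputable def coeffL : TensorFunctional V p q →ₗ[ℝ] ((Fin p → ι) → (Fin q → ι) → ℝ) where
  toFun Φ := fun I J => coeffT b Φ I J
  map_add' Φ Ψ := by funext I J; simp [coeffT_add]
  map_smul' c Φ := by funext I J; simp [coeffT_smul]

include b in
lemma tf_finiteDimensional : FiniteDimensional ℝ (TensorFunctional V p q) := by
  refine FiniteDimensional.of_injective (coeffL b) fun x y h => ?_
  have : x - y = 0 := by
    refine eq_zero_of_coeffT b _ fun I J => ?_
    have := congrFun (congrFun h I) J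
    simp only [coeffL, LinearMap.coe_mk, AddHom.coe_mk] at this
    rw [show x - y = x + (-1 : ℝ) • y by ext ω v; simp [sub_eq_add_neg], coeffT_add, coeffT_smul, this]
    ring
  exact sub_eq_zero.mp this

end Coeff

section Bform

variable {ι : Type*} [Fintype ι] [DecidableEq ι] (b : Module.Basis ι ℝ V)

/-- a positive definite bilinear form on the space of tensor functionals -/
noncomputable def Bform : LinearMap.BilinForm ℝ (TensorFunctional V p q) :=
  LinearMap.mk₂ ℝ
    (fun Φ Ψ => ∑ I : Fin p → ι, ∑ J : Fin q → ι, coeffT b Φ I J * coeffT b Ψ I J)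
    (fun Φ Φ' Ψ => by simp [coeffT_add, add_mul, Finset.sum_add_distrib])
    (fun c Φ Ψ => by simp [coeffT_smul, Finset.mul_sum, mul_assoc])
    (fun Φ Ψ Ψ' => by simp [coeffT_add, mul_add, Finset.sum_add_distrib])
    (fun c Φ Ψ => by
      simp only [coeffT_smul, Finset.mul_sum, smul_eq_mul]
      refine Finset.sum_congr rfl fun I _ => Finset.sum_congr rfl fun J _ => ?_
      ring)

lemma Bform_apply (Φ Ψ : TensorFunctional V p q) :
    Bform b Φ Ψ = ∑ I : Fin p → ι, ∑ J : Fin q → ι, coeffT b Φ I J * coeffT b Ψ I J := rfl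

lemma Bform_symm (Φ Ψ : TensorFunctional V p q) : Bform b Φ Ψ = Bform b Ψ Φ := by
  simp only [Bform_apply]
  exact Finset.sum_congr rfl fun I _ => Finset.sum_congr rfl fun J _ => mul_comm _ _

lemma Bform_isRefl :
    (Bform b : LinearMap.BilinForm ℝ (TensorFunctional V p q)).IsRefl :=
  fun Φ Ψ h => by rw [Bform_symm] at h; exact h

lemma Bform_def (Φ : TensorFunctional V p q) (h : Bform b Φ Φ = 0) : Φ = 0 := by
  refine eq_zero_of_coeffT b Φ fun I J => ?_
  have h1 : ∀ I : Fin p → ι, ∑ J : Fin q → ι, coeffT b Φ I J * coeffT b Φ I J = 0 := by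
    rw [Bform_apply] at h
    have := (Finset.sum_eq_zero_iff_of_nonneg (fun I _ =>
      Finset.sum_nonneg fun J _ => mul_self_nonneg _)).mp h
    exact fun I => this I (Finset.mem_univ I)
  have h2 := (Finset.sum_eq_zero_iff_of_nonneg fun J _ => mul_self_nonneg _).mp (h1 I)
  exact mul_self_eq_zero.mp (h2 J (Finset.mem_univ J))

lemma sum4_comm {α β γ δ M : Type*} [Fintype α] [Fintype β] [Fintype γ] [Fintype δ]
    [AddCommMonoid M] (f : α → β → γ → δ → M) :
    ∑ a, ∑ b, ∑ c, ∑ d, f a b c d = ∑ c, ∑ d, ∑ a, ∑ b, f a b c d := by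
  trans ∑ a, ∑ c, ∑ b, ∑ d, f a b c d
  · exact Finset.sum_congr rfl fun a _ => Finset.sum_comm
  rw [Finset.sum_comm]
  refine Finset.sum_congr rfl fun c _ => ?_
  trans ∑ a, ∑ d, ∑ b, f a b c d
  · exact Finset.sum_congr rfl fun a _ => Finset.sum_comm
  exact Finset.sum_comm

lemma Bform_adj (g : V ≃ₗ[ℝ] V) (x y : TensorFunctional V p q) :
    Bform b (glAct g x) y = Bform b x (glAct (transpEquiv b g) y) := by
  simp only [Bform_apply, coeffT_glAct, transpEquiv_entry, transpEquiv_symm_entry,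
    Finset.sum_mul, Finset.mul_sum]
  rw [sum4_comm]
  refine Finset.sum_congr rfl fun K _ => Finset.sum_congr rfl fun L _ =>
    Finset.sum_congr rfl fun I _ => Finset.sum_congr rfl fun J _ => ?_
  ring

end Bform

set_option maxHeartbeats 1000000 in
/-- Semisimplicity of tensor representations of `GL(V)`: every `GL(V)`-invariant
linear functional on a `GL(V)`-invariant subspace `E' ⊆ E` extends to a
`GL(V)`-invariant linear functional on all of `E`. -/
theorem invariant_functional_extends
    (V : Type*) [AddCommGroup V] [Module ℝ V] [FiniteDimensional ℝ V] (p q : ℕ)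
    (E' : Submodule ℝ (TensorFunctional V p q))
    (hE' : ∀ (g : V ≃ₗ[ℝ] V) (Φ : TensorFunctional V p q), Φ ∈ E' → glAct g Φ ∈ E')
    (φ : E' →ₗ[ℝ] ℝ)
    (hφ : ∀ (g : V ≃ₗ[ℝ] V) (Φ : TensorFunctional V p q) (hΦ : Φ ∈ E'),
        φ ⟨glAct g Φ, hE' g Φ hΦ⟩ = φ ⟨Φ, hΦ⟩) :
    ∃ ψ : TensorFunctional V p q →ₗ[ℝ] ℝ,
      (∀ (g : V ≃ₗ[ℝ] V) (Φ : TensorFunctional V p q), ψ (glAct g Φ) = ψ Φ) ∧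
      (∀ x : E', ψ (x : TensorFunctional V p q) = φ x) := by
  classical
  let b : Module.Basis (Fin (Module.finrank ℝ V)) ℝ V := Module.finBasis ℝ V
  haveI : FiniteDimensional ℝ (TensorFunctional V p q) := tf_finiteDimensional b
  set B : LinearMap.BilinForm ℝ (TensorFunctional V p q) := Bform b with hB
  have hrefl : B.IsRefl := Bform_isRefl b
  have hnd : (B.restrict E').Nondegenerate := by
    constructor <;>
    · intro x hx
      have hxx : B x x = 0 := hx x
      have : (x : TensorFunctional V p q) = 0 := Bform_def b _ hxx
      exact Subtype.ext this
  have hc : IsCompl E' (B.orthogonal E') :=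
    by
      have h := @LinearMap.BilinForm.isCompl_orthogonal_of_restrict_nondegenerate (TensorFunctional V p q) ℝ _ _ _ _ B E'
      exact h hrefl hnd
  have horthinv : ∀ (g : V ≃ₗ[ℝ] V) (y : TensorFunctional V p q),
      y ∈ B.orthogonal E' → glAct g y ∈ B.orthogonal E' := by
    intro g y hy
    rw [LinearMap.BilinForm.mem_orthogonal_iff]
    intro x hx
    have h1 : B x (glAct g y) = B (glAct (transpEquiv b g) x) y := by
      rw [Bform_symm, hB, Bform_adj, ← hB, Bform_symm]
    have h2 : B (glAct (transpEquiv b g) x) y = 0 :=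
      hy _ (hE' (transpEquiv b g) x hx)
    show B x (glAct g y) = 0
    rw [h1, h2]
  let π := @Submodule.projectionOnto ℝ _ (TensorFunctional V p q) _ _ E' (B.orthogonal E') hc
  refine ⟨φ.comp π, ?_, ?_⟩
  · intro g Φ
    have hmem1 : glAct g (π Φ : TensorFunctional V p q) ∈ E' := hE' g _ (π Φ).2
    have hdec : Φ - (π Φ : TensorFunctional V p q) ∈ B.orthogonal E' := by
      exact Submodule.sub_projection_mem (E := TensorFunctional V p q) hc Φ
    have h2 : glAct g (Φ - (π Φ : TensorFunctional V p q)) ∈ B.orthogonal E' := horthinv g _ hdec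
    have hsplit : glAct g Φ = glAct g (π Φ : TensorFunctional V p q) + glAct g (Φ - (π Φ : TensorFunctional V p q)) := by
      rw [← glAct_add]
      congr 1
      abel
    have hπ : π (glAct g Φ) = ⟨glAct g (π Φ : TensorFunctional V p q), hmem1⟩ := by
      rw [hsplit, map_add, Submodule.projectionOnto_apply_of_mem_right (E := TensorFunctional V p q) hc h2, add_zero]
      exact Submodule.projectionOnto_apply_left (E := TensorFunctional V p q) hc ⟨glAct g (π Φ : TensorFunctional V p q), hmem1⟩
    calc φ (π (glAct g Φ)) = φ ⟨glAct g (π Φ : TensorFunctional V p q), hE' g _ (π Φ).2⟩ := by rw [hπ]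
      _ = φ ⟨(π Φ : TensorFunctional V p q), (π Φ).2⟩ := hφ g (π Φ : TensorFunctional V p q) (π Φ).2
      _ = φ (π Φ) := by congr
  · intro x
    show φ (π ↑x) = φ x
    rw [Submodule.projectionOnto_apply_left (E := TensorFunctional V p q) hc x]
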